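/- arXiv:2404.06586 — 3 statements merged into one kernel-verified Lean document; each statement's English description precedes it below -/
import Mathlib

section
/- The functions I_0 = λ_{2n+1}, I_k = λ_{k+n}, and I_{n+k} = λ_k + y_k λ_{2n+1} (k = 1,…,n) are first integrals of the Hamiltonian system on T*ℝ^{2n+1} with Hamiltonian H = (1/2) Σ_{k=1}^n (1/σ_k)[λ_k² + (λ_{k+n} + x_k λ_{2n+1})²]: each has vanishing canonical Poisson bracket with H. -/
/-- Phase space `T*ℝ^{2n+1}` with coordinates `(q, λ)`,
`q = (x₁,…,xₙ,y₁,…,yₙ,z)`. -/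
abbrev Phase (n : ℕ) := (Fin (2 * n + 1) → ℝ) × (Fin (2 * n + 1) → ℝ)

/-- Index of `x_k` (resp. `λ_k`). -/
def ix {n : ℕ} (k : Fin n) : Fin (2 * n + 1) := ⟨k.1, by have := k.isLt; omega⟩

/-- Index of `y_k` (resp. `λ_{n+k}`). -/
def iy {n : ℕ} (k : Fin n) : Fin (2 * n + 1) := ⟨k.1 + n, by have := k.isLt; omega⟩

/-- Index of `z` (resp. `λ_{2n+1}`). -/
def iz {n : ℕ} : Fin (2 * n + 1) := ⟨2 * n, by omega⟩

/-- Canonical Poisson bracket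
`{f,g} = ∑ᵢ (∂f/∂qᵢ ∂g/∂λᵢ − ∂f/∂λᵢ ∂g/∂qᵢ)`. -/
noncomputable def PB {n : ℕ} (f g : Phase n → ℝ) (z : Phase n) : ℝ :=
  ∑ i, (fderiv ℝ f z (Pi.single i 1, 0) * fderiv ℝ g z (0, Pi.single i 1)
      - fderiv ℝ f z (0, Pi.single i 1) * fderiv ℝ g z (Pi.single i 1, 0))

/-- The LL Hamiltonian
`H = (1/2) ∑ₖ (1/σₖ)[λₖ² + (λ_{k+n} + xₖ λ_{2n+1})²]`. -/
noncomputable def Ham (n : ℕ) (σ : Fin n → ℝ) (z : Phase n) : ℝ :=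
  (1 / 2) * ∑ k, (1 / σ k) *
    ((z.2 (ix k)) ^ 2 + (z.2 (iy k) + z.1 (ix k) * z.2 iz) ^ 2)

/-! ### Auxiliary material -/

open ContinuousLinearMap in
/-- Projection onto the `i`-th position coordinate, as a continuous linear map. -/
noncomputable def pq {n : ℕ} (i : Fin (2*n+1)) : Phase n →L[ℝ] ℝ :=
  (proj i).comp (fst ℝ _ _)

open ContinuousLinearMap in
/-- Projection onto the `i`-th momentum coordinate, as a continuous linear map. -/
noncomputable def pl {n : ℕ} (i : Fin (2*n+1)) : Phase n →L[ℝ] ℝ :=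
  (proj i).comp (snd ℝ _ _)

@[simp] lemma pq_apply {n : ℕ} (i : Fin (2*n+1)) (w : Phase n) : pq i w = w.1 i := rfl
@[simp] lemma pl_apply {n : ℕ} (i : Fin (2*n+1)) (w : Phase n) : pl i w = w.2 i := rfl

lemma hq {n : ℕ} (i : Fin (2*n+1)) (z : Phase n) :
    HasFDerivAt (fun w : Phase n => w.1 i) (pq i) z := (pq i).hasFDerivAt

lemma hl {n : ℕ} (i : Fin (2*n+1)) (z : Phase n) :
    HasFDerivAt (fun w : Phase n => w.2 i) (pl i) z := (pl i).hasFDerivAt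

lemma hA {n : ℕ} (k : Fin n) (z : Phase n) :
    HasFDerivAt (fun w : Phase n => w.2 (iy k) + w.1 (ix k) * w.2 iz)
      (pl (iy k) + (z.1 (ix k) • pl iz + z.2 iz • pq (ix k))) z :=
  (hl (iy k) z).add ((hq (ix k) z).mul (hl iz z))

lemma hamHasFDeriv {n : ℕ} (σ : Fin n → ℝ) (z : Phase n) :
    HasFDerivAt (Ham n σ)
      ((1/2 : ℝ) • ∑ k, (1/σ k) •
        ((z.2 (ix k) • pl (ix k) + z.2 (ix k) • pl (ix k))
          + ((z.2 (iy k) + z.1 (ix k) * z.2 iz) •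
              (pl (iy k) + (z.1 (ix k) • pl iz + z.2 iz • pq (ix k)))
            + (z.2 (iy k) + z.1 (ix k) * z.2 iz) •
              (pl (iy k) + (z.1 (ix k) • pl iz + z.2 iz • pq (ix k)))))) z := by
  have e : Ham n σ = fun w : Phase n => (1/2 : ℝ) * ∑ k, (1/σ k) *
      ((w.2 (ix k)) * (w.2 (ix k))
        + (w.2 (iy k) + w.1 (ix k) * w.2 iz) * (w.2 (iy k) + w.1 (ix k) * w.2 iz)) := by
    funext w; unfold Ham; congr 1; apply Finset.sum_congr rfl; intro k _; ring
  rw [e]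
  apply HasFDerivAt.const_mul
  apply HasFDerivAt.fun_sum
  intro k _
  apply HasFDerivAt.const_mul
  exact ((hl (ix k) z).mul (hl (ix k) z)).add ((hA k z).mul (hA k z))

lemma ham_fderiv_apply {n : ℕ} (σ : Fin n → ℝ) (z : Phase n) (u v : Fin (2*n+1) → ℝ) :
    fderiv ℝ (Ham n σ) z (u, v) =
      ∑ k, (1/σ k) * (z.2 (ix k) * v (ix k)
        + (z.2 (iy k) + z.1 (ix k) * z.2 iz) *
            (v (iy k) + (z.1 (ix k) * v iz + z.2 iz * u (ix k)))) := by
  rw [(hamHasFDeriv σ z).fderiv]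
  simp only [ContinuousLinearMap.smul_apply, ContinuousLinearMap.coe_sum',
    Finset.sum_apply, ContinuousLinearMap.add_apply, pq_apply, pl_apply,
    smul_eq_mul, Finset.mul_sum]
  apply Finset.sum_congr rfl
  intro k _
  ring

@[simp] lemma ix_inj {n : ℕ} (k j : Fin n) : ix k = ix j ↔ k = j := by
  simp [ix, Fin.ext_iff]
@[simp] lemma iy_inj {n : ℕ} (k j : Fin n) : iy k = iy j ↔ k = j := by
  simp [iy, Fin.ext_iff]
@[simp] lemma ix_ne_iy {n : ℕ} (k j : Fin n) : ix k ≠ iy j := by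
  have := k.isLt; have := j.isLt; simp [ix, iy, Fin.ext_iff]; omega
@[simp] lemma iy_ne_ix {n : ℕ} (k j : Fin n) : iy k ≠ ix j := (ix_ne_iy j k).symm
@[simp] lemma ix_ne_iz {n : ℕ} (k : Fin n) : ix k ≠ iz := by
  have := k.isLt; simp [ix, iz, Fin.ext_iff]; omega
@[simp] lemma iz_ne_ix {n : ℕ} (k : Fin n) : iz ≠ ix k := (ix_ne_iz k).symm
@[simp] lemma iy_ne_iz {n : ℕ} (k : Fin n) : iy k ≠ iz := by
  have := k.isLt; simp [iy, iz, Fin.ext_iff]; omega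
@[simp] lemma iz_ne_iy {n : ℕ} (k : Fin n) : iz ≠ iy k := (iy_ne_iz k).symm

/-- `I₀ = λ_{2n+1}`, `Iₖ = λ_{k+n}`, `I_{n+k} = λₖ + yₖ λ_{2n+1}`
are first integrals of the LL Hamiltonian system. -/
theorem LL_linear_first_integrals (n : ℕ) (σ : Fin n → ℝ) (hσ : ∀ k, 0 < σ k)
    (z : Phase n) :
    PB (fun w => w.2 iz) (Ham n σ) z = 0 ∧
    (∀ k : Fin n, PB (fun w => w.2 (iy k)) (Ham n σ) z = 0) ∧
    (∀ k : Fin n, PB (fun w => w.2 (ix k) + w.1 (iy k) * w.2 iz) (Ham n σ) z = 0) := by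
  refine ⟨?_, ?_, ?_⟩
  · have hf : fderiv ℝ (fun w : Phase n => w.2 iz) z = pl iz := (hl iz z).fderiv
    unfold PB
    simp only [hf, ham_fderiv_apply, pl_apply, Pi.zero_apply, Pi.single_apply, mul_zero,
      zero_mul, add_zero, zero_add, mul_one, mul_ite, ite_mul, Finset.mul_sum, ix_inj,
      iy_inj, ix_ne_iy, iy_ne_ix, ix_ne_iz, iz_ne_ix, iy_ne_iz, iz_ne_iy, if_false, if_neg,
      Finset.sum_ite_eq, Finset.mem_univ, if_true, sub_zero, zero_sub]
    apply Finset.sum_eq_zero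
    intro i _
    simp only [Finset.sum_const_zero, zero_sub, neg_eq_zero]
    apply Finset.sum_eq_zero
    intro j _
    rcases eq_or_ne (ix j) i with h | h
    · subst h; simp
    · simp [h]
  · intro k
    have hf : fderiv ℝ (fun w : Phase n => w.2 (iy k)) z = pl (iy k) := (hl (iy k) z).fderiv
    unfold PB
    simp only [hf, ham_fderiv_apply, pl_apply, Pi.zero_apply, Pi.single_apply, mul_zero,
      zero_mul, add_zero, zero_add, mul_one, mul_ite, ite_mul, Finset.mul_sum, ix_inj,
      iy_inj, ix_ne_iy, iy_ne_ix, ix_ne_iz, iz_ne_ix, iy_ne_iz, iz_ne_iy, if_false, if_neg,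
      Finset.sum_ite_eq, Finset.mem_univ, if_true, sub_zero, zero_sub]
    apply Finset.sum_eq_zero
    intro i _
    simp only [Finset.sum_const_zero, zero_sub, neg_eq_zero]
    apply Finset.sum_eq_zero
    intro j _
    rcases eq_or_ne (ix j) i with h | h
    · subst h; simp
    · simp [h]
  · intro k
    have hf : fderiv ℝ (fun w : Phase n => w.2 (ix k) + w.1 (iy k) * w.2 iz) z
        = pl (ix k) + (z.1 (iy k) • pl iz + z.2 iz • pq (iy k)) :=
      ((hl (ix k) z).add ((hq (iy k) z).mul (hl iz z))).fderiv
    unfold PB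
    simp only [hf, ham_fderiv_apply, ContinuousLinearMap.add_apply,
      ContinuousLinearMap.smul_apply, pq_apply, pl_apply, smul_eq_mul, Pi.zero_apply,
      Pi.single_apply, mul_zero, zero_mul, add_zero, zero_add, mul_one, mul_ite, ite_mul,
      Finset.mul_sum, ix_inj, iy_inj, ix_ne_iy, iy_ne_ix, ix_ne_iz, iz_ne_ix, iy_ne_iz,
      iz_ne_iy, if_false, if_neg, Finset.sum_ite_eq, Finset.mem_univ, if_true, sub_zero,
      zero_sub]
    rw [Finset.sum_sub_distrib, sub_eq_zero, Finset.sum_comm]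
    conv_rhs => rw [Finset.sum_comm]
    simp only [Finset.sum_ite_eq, Finset.mem_univ, if_true, ix_inj, iy_inj, ix_ne_iy,
      iy_ne_ix, ix_ne_iz, iz_ne_ix, iy_ne_iz, iz_ne_iy, if_false, if_neg, mul_zero,
      zero_mul, add_zero, zero_add, mul_one]
    apply Finset.sum_congr rfl
    intro j _
    rcases eq_or_ne j k with h | h
    · subst h; ring
    · simp [h, Ne.symm h]
end

section
/- The functions I_{2n+k} = λ_k² + (λ_{n+k} + λ_{2n+1} x_k)², k = 1,…,n, are first integrals of the Hamiltonian system with Hamiltonian H = (1/2) Σ_{k=1}^n (1/σ_k)[λ_k² + (λ_{k+n} + x_k λ_{2n+1})²] on T*ℝ^{2n+1} with the canonical Poisson structure. -/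
namespace LLaux
variable {n : ℕ}
noncomputable def P1 (i : Fin (2*n+1)) : Phase n →L[ℝ] ℝ :=
  (ContinuousLinearMap.proj i).comp (ContinuousLinearMap.fst ℝ _ _)
noncomputable def P2 (i : Fin (2*n+1)) : Phase n →L[ℝ] ℝ :=
  (ContinuousLinearMap.proj i).comp (ContinuousLinearMap.snd ℝ _ _)

lemma hP1 (a : Fin (2*n+1)) (z : Phase n) : HasFDerivAt (fun w : Phase n => w.1 a) (P1 a) z :=
  (P1 a).hasFDerivAt
lemma hP2 (a : Fin (2*n+1)) (z : Phase n) : HasFDerivAt (fun w : Phase n => w.2 a) (P2 a) z :=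
  (P2 a).hasFDerivAt

@[simp] lemma P1_apply (a : Fin (2*n+1)) (u v : Fin (2*n+1) → ℝ) : P1 a (u, v) = u a := rfl
@[simp] lemma P2_apply (a : Fin (2*n+1)) (u v : Fin (2*n+1) → ℝ) : P2 a (u, v) = v a := rfl

lemma ix_ne_iy (j l : Fin n) : ix j ≠ iy l := by
  intro h; have := congrArg Fin.val h; simp only [ix, iy] at this; have := j.isLt; omega
lemma ix_ne_iz (j : Fin n) : ix j ≠ (iz : Fin (2*n+1)) := by
  intro h; have := congrArg Fin.val h; simp only [ix, iz] at this; have := j.isLt; omega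
lemma iy_ne_iz (j : Fin n) : iy j ≠ (iz : Fin (2*n+1)) := by
  intro h; have := congrArg Fin.val h; simp only [iy, iz] at this; have := j.isLt; omega
lemma ix_inj {j l : Fin n} (h : ix j = ix l) : j = l := by
  have := congrArg Fin.val h; simp only [ix] at this; exact Fin.ext this

@[simp] lemma ix_eq_ix (j l : Fin n) : ix j = ix l ↔ j = l :=
  ⟨ix_inj, fun h => h ▸ rfl⟩
@[simp] lemma ix_eq_iy (j l : Fin n) : (ix j = iy l) ↔ False :=
  iff_false_intro (ix_ne_iy j l)
@[simp] lemma iy_eq_ix (j l : Fin n) : (iy j = ix l) ↔ False :=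
  iff_false_intro fun h => ix_ne_iy l j h.symm
@[simp] lemma ix_eq_iz (j : Fin n) : (ix j = (iz : Fin (2*n+1))) ↔ False :=
  iff_false_intro (ix_ne_iz j)
@[simp] lemma iz_eq_ix (j : Fin n) : ((iz : Fin (2*n+1)) = ix j) ↔ False :=
  iff_false_intro fun h => ix_ne_iz j h.symm
@[simp] lemma iy_eq_iz (j : Fin n) : (iy j = (iz : Fin (2*n+1))) ↔ False :=
  iff_false_intro (iy_ne_iz j)
@[simp] lemma iz_eq_iy (j : Fin n) : ((iz : Fin (2*n+1)) = iy j) ↔ False :=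
  iff_false_intro fun h => iy_ne_iz j h.symm
@[simp] lemma iy_eq_iy (j l : Fin n) : iy j = iy l ↔ j = l := by
  constructor
  · intro h; have := congrArg Fin.val h; simp only [iy] at this; exact Fin.ext (by omega)
  · intro h; rw [h]

end LLaux

open LLaux

/-- the quadratic functions
`I_{2n+k} = λₖ² + (λ_{n+k} + λ_{2n+1} xₖ)²`, `k = 1,…,n`, are first integrals
of the LL Hamiltonian system. -/
theorem LL_quadratic_first_integrals (n : ℕ) (σ : Fin n → ℝ) (hσ : ∀ k, 0 < σ k)
    (z : Phase n) (k : Fin n) :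
    PB (fun w => (w.2 (ix k)) ^ 2 + (w.2 (iy k) + w.2 iz * w.1 (ix k)) ^ 2)
      (Ham n σ) z = 0 := by
  classical
  have hI : HasFDerivAt
      (fun w : Phase n => (w.2 (ix k)) ^ 2 + (w.2 (iy k) + w.2 iz * w.1 (ix k)) ^ 2)
      (((z.2 (ix k)) • P2 (ix k) + (z.2 (ix k)) • P2 (ix k)) +
        ((z.2 (iy k) + z.2 iz * z.1 (ix k)) • (P2 (iy k) + ((z.2 iz) • P1 (ix k) + (z.1 (ix k)) • P2 iz)) +
         (z.2 (iy k) + z.2 iz * z.1 (ix k)) • (P2 (iy k) + ((z.2 iz) • P1 (ix k) + (z.1 (ix k)) • P2 iz)))) z := by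
    have hfun : (fun w : Phase n => (w.2 (ix k)) ^ 2 + (w.2 (iy k) + w.2 iz * w.1 (ix k)) ^ 2)
        = fun w : Phase n => (w.2 (ix k)) * (w.2 (ix k)) +
            (w.2 (iy k) + w.2 iz * w.1 (ix k)) * (w.2 (iy k) + w.2 iz * w.1 (ix k)) := by
      funext w; ring
    rw [hfun]
    exact ((hP2 (ix k) z).mul (hP2 (ix k) z)).add
      (((hP2 (iy k) z).add ((hP2 iz z).mul (hP1 (ix k) z))).mul
       ((hP2 (iy k) z).add ((hP2 iz z).mul (hP1 (ix k) z))))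
  have hH : HasFDerivAt (Ham n σ)
      ((1/2 : ℝ) • ∑ j : Fin n, (1 / σ j) •
        (((z.2 (ix j)) • P2 (ix j) + (z.2 (ix j)) • P2 (ix j)) +
         ((z.2 (iy j) + z.1 (ix j) * z.2 iz) • (P2 (iy j) + ((z.1 (ix j)) • P2 iz + (z.2 iz) • P1 (ix j))) +
          (z.2 (iy j) + z.1 (ix j) * z.2 iz) • (P2 (iy j) + ((z.1 (ix j)) • P2 iz + (z.2 iz) • P1 (ix j)))))) z := by
    have hfun : Ham n σ = fun w : Phase n => (1/2 : ℝ) * ∑ j : Fin n, (1 / σ j) *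
        ((w.2 (ix j)) * (w.2 (ix j)) +
         (w.2 (iy j) + w.1 (ix j) * w.2 iz) * (w.2 (iy j) + w.1 (ix j) * w.2 iz)) := by
      funext w; simp only [Ham]; congr 1; apply Finset.sum_congr rfl; intro j _; ring
    rw [hfun]
    exact HasFDerivAt.const_mul (HasFDerivAt.fun_sum fun j _ =>
      HasFDerivAt.const_mul (((hP2 (ix j) z).mul (hP2 (ix j) z)).add
        (((hP2 (iy j) z).add ((hP1 (ix j) z).mul (hP2 iz z))).mul
         ((hP2 (iy j) z).add ((hP1 (ix j) z).mul (hP2 iz z))))) _) _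
  rw [PB]
  rw [hI.fderiv, hH.fderiv]
  simp only [ContinuousLinearMap.add_apply, ContinuousLinearMap.smul_apply,
    ContinuousLinearMap.coe_sum', Finset.sum_apply, P1_apply, P2_apply,
    smul_eq_mul, Pi.zero_apply, mul_zero, zero_mul, add_zero, zero_add,
    Pi.single_apply]
  refine Finset.sum_eq_zero fun i _ => ?_
  simp only [Finset.mul_sum]
  rw [← Finset.sum_sub_distrib]
  refine Finset.sum_eq_zero fun j _ => ?_
  rcases eq_or_ne (ix j) i with h | h
  · subst h
    rcases eq_or_ne k j with hk | hk
    · subst hk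
      simp only [ix_eq_ix, iy_eq_ix, ix_eq_iy, iz_eq_ix, if_pos rfl, if_false, iff_true]
      ring
    · simp [hk, (Ne.symm hk)]
  · rcases eq_or_ne (ix k) i with h1 | h1
    · subst h1
      simp [h]
    · simp [h, h1]
end

section
/- For the system on ℝ^8 (n = 2 reduced LR Heisenberg system) ẋ_k = p_k + y_k W, ẏ_k = p_{k+2} − x_k W, ṗ_k = (C+W)(p_{k+2} − x_k W), ṗ_{k+2} = −(C+W)(p_k + y_k W) for k = 1,2, with W = (p_3 x_1 + p_4 x_2 − p_1 y_1 − p_2 y_2)/(1 + x_1² + x_2² + y_1² + y_2²), the Hamiltonian H_C = (1/2)(p_1²+p_2²+p_3²+p_4² − (1+x_1²+x_2²+y_1²+y_2²) W²) is a conserved quantity. -/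
set_option maxRecDepth 100000 in
set_option maxHeartbeats 1000000 in
/-- for the `n = 2` reduced LR Heisenberg system with
`W = (p₃x₁ + p₄x₂ − p₁y₁ − p₂y₂)/(1 + x₁²+x₂²+y₁²+y₂²)`, the Hamiltonian
`H_C = (1/2)(p₁²+p₂²+p₃²+p₄² − (1+x₁²+x₂²+y₁²+y₂²)W²)` is conserved along the
flow `ẋₖ = pₖ + yₖW`, `ẏₖ = p_{k+2} − xₖW`, `ṗₖ = (C+W)(p_{k+2} − xₖW)`,
`ṗ_{k+2} = −(C+W)(pₖ + yₖW)`. -/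
theorem LR_n2_energy_conserved (C : ℝ)
    (x1 x2 y1 y2 p1 p2 p3 p4 : ℝ → ℝ)
    (hd : Differentiable ℝ x1 ∧ Differentiable ℝ x2 ∧ Differentiable ℝ y1 ∧
      Differentiable ℝ y2 ∧ Differentiable ℝ p1 ∧ Differentiable ℝ p2 ∧
      Differentiable ℝ p3 ∧ Differentiable ℝ p4)
    (W : ℝ → ℝ)
    (hW : ∀ t, W t = (p3 t * x1 t + p4 t * x2 t - p1 t * y1 t - p2 t * y2 t)
      / (1 + (x1 t) ^ 2 + (x2 t) ^ 2 + (y1 t) ^ 2 + (y2 t) ^ 2))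
    (hx1 : ∀ t, deriv x1 t = p1 t + y1 t * W t)
    (hx2 : ∀ t, deriv x2 t = p2 t + y2 t * W t)
    (hy1 : ∀ t, deriv y1 t = p3 t - x1 t * W t)
    (hy2 : ∀ t, deriv y2 t = p4 t - x2 t * W t)
    (hp1 : ∀ t, deriv p1 t = (C + W t) * (p3 t - x1 t * W t))
    (hp2 : ∀ t, deriv p2 t = (C + W t) * (p4 t - x2 t * W t))
    (hp3 : ∀ t, deriv p3 t = -(C + W t) * (p1 t + y1 t * W t))
    (hp4 : ∀ t, deriv p4 t = -(C + W t) * (p2 t + y2 t * W t)) :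
    ∀ t : ℝ, deriv (fun s =>
      (1 / 2) * ((p1 s) ^ 2 + (p2 s) ^ 2 + (p3 s) ^ 2 + (p4 s) ^ 2
        - (1 + (x1 s) ^ 2 + (x2 s) ^ 2 + (y1 s) ^ 2 + (y2 s) ^ 2)
          * (W s) ^ 2)) t = 0 := by
  obtain ⟨dx1, dx2, dy1, dy2, dp1, dp2, dp3, dp4⟩ := hd
  intro t
  have hDpos : ∀ s : ℝ, (0:ℝ) < 1 + (x1 s) ^ 2 + (x2 s) ^ 2 + (y1 s) ^ 2 + (y2 s) ^ 2 := by
    intro s; positivity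
  have hne : (1 + (x1 t) ^ 2 + (x2 t) ^ 2 + (y1 t) ^ 2 + (y2 t) ^ 2) ≠ 0 := (hDpos t).ne'
  have hx1t : HasDerivAt x1 (p1 t + y1 t * W t) t := hx1 t ▸ (dx1 t).hasDerivAt
  have hx2t : HasDerivAt x2 (p2 t + y2 t * W t) t := hx2 t ▸ (dx2 t).hasDerivAt
  have hy1t : HasDerivAt y1 (p3 t - x1 t * W t) t := hy1 t ▸ (dy1 t).hasDerivAt
  have hy2t : HasDerivAt y2 (p4 t - x2 t * W t) t := hy2 t ▸ (dy2 t).hasDerivAt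
  have hp1t : HasDerivAt p1 ((C + W t) * (p3 t - x1 t * W t)) t := hp1 t ▸ (dp1 t).hasDerivAt
  have hp2t : HasDerivAt p2 ((C + W t) * (p4 t - x2 t * W t)) t := hp2 t ▸ (dp2 t).hasDerivAt
  have hp3t : HasDerivAt p3 (-(C + W t) * (p1 t + y1 t * W t)) t := hp3 t ▸ (dp3 t).hasDerivAt
  have hp4t : HasDerivAt p4 (-(C + W t) * (p2 t + y2 t * W t)) t := hp4 t ▸ (dp4 t).hasDerivAt
  -- derivative of the numerator N and the denominator D of W
  have hN : HasDerivAt (fun s => p3 s * x1 s + p4 s * x2 s - p1 s * y1 s - p2 s * y2 s) _ t :=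
    (((hp3t.mul hx1t).add (hp4t.mul hx2t)).sub (hp1t.mul hy1t)).sub (hp2t.mul hy2t)
  have hD : HasDerivAt (fun s => 1 + (x1 s) ^ 2 + (x2 s) ^ 2 + (y1 s) ^ 2 + (y2 s) ^ 2) _ t :=
    ((((hasDerivAt_const t (1:ℝ)).add (hx1t.pow 2)).add (hx2t.pow 2)).add
      (hy1t.pow 2)).add (hy2t.pow 2)
  -- N t = W t * D t
  have hNW : p3 t * x1 t + p4 t * x2 t - p1 t * y1 t - p2 t * y2 t
      = W t * (1 + (x1 t) ^ 2 + (x2 t) ^ 2 + (y1 t) ^ 2 + (y2 t) ^ 2) := by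
    rw [hW t]; field_simp
  -- W is differentiable with a clean derivative
  have hWfun : W = fun s => (p3 s * x1 s + p4 s * x2 s - p1 s * y1 s - p2 s * y2 s)
      / (1 + (x1 s) ^ 2 + (x2 s) ^ 2 + (y1 s) ^ 2 + (y2 s) ^ 2) := funext hW
  have hN' : HasDerivAt (fun s => p3 s * x1 s + p4 s * x2 s - p1 s * y1 s - p2 s * y2 s)
      (-C * (p1 t * x1 t + p2 t * x2 t + p3 t * y1 t + p4 t * y2 t)) t := by
    convert hN using 1
    ring
  have hD' : HasDerivAt (fun s => 1 + (x1 s) ^ 2 + (x2 s) ^ 2 + (y1 s) ^ 2 + (y2 s) ^ 2)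
      (2 * (p1 t * x1 t + p2 t * x2 t + p3 t * y1 t + p4 t * y2 t)) t := by
    convert hD using 1
    push_cast
    ring
  have hWd : HasDerivAt W
      (-((p1 t * x1 t + p2 t * x2 t + p3 t * y1 t + p4 t * y2 t) * (C + 2 * W t))
        / (1 + (x1 t) ^ 2 + (x2 t) ^ 2 + (y1 t) ^ 2 + (y2 t) ^ 2)) t := by
    refine HasDerivAt.congr_of_eventuallyEq ?_ (Filter.Eventually.of_forall hW)
    refine (hN'.div hD' hne).congr_deriv ?_
    symm
    rw [div_eq_div_iff hne (pow_ne_zero 2 hne)]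
    linear_combination (2 * (p1 t * x1 t + p2 t * x2 t + p3 t * y1 t + p4 t * y2 t)
      * (1 + (x1 t) ^ 2 + (x2 t) ^ 2 + (y1 t) ^ 2 + (y2 t) ^ 2)) * hNW
  -- derivative of the Hamiltonian
  have hH : HasDerivAt (fun s =>
      (1 / 2) * ((p1 s) ^ 2 + (p2 s) ^ 2 + (p3 s) ^ 2 + (p4 s) ^ 2
        - (1 + (x1 s) ^ 2 + (x2 s) ^ 2 + (y1 s) ^ 2 + (y2 s) ^ 2) * (W s) ^ 2)) _ t :=
    (((((hp1t.pow 2).add (hp2t.pow 2)).add (hp3t.pow 2)).add (hp4t.pow 2)).sub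
      (hD.mul (hWd.pow 2))).const_mul _
  refine (hH.deriv).trans ?_
  simp only [Pi.pow_apply]
  field_simp
  ring
end
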